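/- For nonnegative integers M, N_R, N_T with 1 ≤ N_R, 1 ≤ M ≤ N_T, and real α ≥ 0, define d_MMSE(α, M) = αM/(M − N_R) if N_R < M and 0 ≤ α ≤ M − N_R, and d_MMSE(α, M) = M otherwise (i.e., if α > M − N_R or N_R ≥ M). Then the maximum over M ∈ {1,…,N_T} of d_MMSE(α, M) is: N_T if α > N_T − N_R; ⌊α⌋ + N_R if α ≤ N_T − N_R and {α}(⌊α⌋ + N_R + 1) ≤ N_R; and α(⌊α⌋+N_R+1)/(⌊α⌋+1) if α ≤ N_T − N_R and {α}(⌊α⌋+N_R+1) > N_R. Here ⌊α⌋ and {α} denote the integer and fractional parts of α. -/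

import Mathlib

open Finset

/-- Theorem 4.1 (RBF-MMSE part): the maximum single-cell DoF over the number of
transmit beams M ∈ {1,…,N_T}. -/
theorem stmt_14 (NT NR : ℕ) (hNT : 1 ≤ NT) (hNR : 1 ≤ NR) (hNRT : NR ≤ NT)
    (α : ℝ) (hα : 0 ≤ α)
    (d : ℝ → ℕ → ℝ)
    (hd : ∀ (a : ℝ) (M : ℕ), d a M =
      if NR < M ∧ a ≤ (M : ℝ) - NR then a * M / ((M : ℝ) - NR) else M) :
    (Finset.Icc 1 NT).sup' (Finset.nonempty_Icc.2 hNT) (fun M => d α M) =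
      if (NT : ℝ) - NR < α then (NT : ℝ)
      else if Int.fract α * ((⌊α⌋₊ : ℝ) + NR + 1) ≤ NR then (⌊α⌋₊ : ℝ) + NR
      else α * ((⌊α⌋₊ : ℝ) + NR + 1) / ((⌊α⌋₊ : ℝ) + 1) := by
  have hK : ((⌊α⌋₊ : ℕ) : ℝ) ≤ α := Nat.floor_le hα
  have hK1 : α < (⌊α⌋₊ : ℝ) + 1 := Nat.lt_floor_add_one α
  have hfr : Int.fract α = α - (⌊α⌋₊ : ℝ) := by
    rw [Int.fract]
    congr 1
    exact_mod_cast (Int.toNat_of_nonneg (Int.floor_nonneg.2 hα)).symm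
  have hNR1 : (1:ℝ) ≤ (NR:ℝ) := by exact_mod_cast hNR
  set K := ⌊α⌋₊ with hKdef
  split_ifs with h1 h2
  · -- α > NT - NR : sup = NT
    apply le_antisymm
    · apply Finset.sup'_le
      intro M hM
      have hMT : (M:ℝ) ≤ NT := by exact_mod_cast (Finset.mem_Icc.1 hM).2
      rw [hd]
      split_ifs with hb
      · obtain ⟨hb1, hb2⟩ := hb
        have hpos : (0:ℝ) < (M:ℝ) - NR := by
          have : (NR:ℝ) < M := by exact_mod_cast hb1
          linarith
        rw [div_le_iff₀ hpos]
        nlinarith [(by positivity : (0:ℝ) ≤ (M:ℝ))]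
      · exact hMT
    · have hmem : NT ∈ Finset.Icc 1 NT := Finset.mem_Icc.2 ⟨hNT, le_rfl⟩
      refine le_trans ?_ (Finset.le_sup' (fun M => d α M) hmem)
      rw [hd, if_neg]
      rintro ⟨_, h⟩
      linarith
  · -- α ≤ NT - NR and fract α * (K + NR + 1) ≤ NR : sup = K + NR
    push_neg at h1
    rw [hfr] at h2
    have hKNT : K + NR ≤ NT := by
      have : (K:ℝ) + NR ≤ NT := by linarith
      exact_mod_cast this
    apply le_antisymm
    · apply Finset.sup'_le
      intro M hM
      rw [hd]
      split_ifs with hb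
      · obtain ⟨hb1, hb2⟩ := hb
        have hb1' : (NR:ℝ) < M := by exact_mod_cast hb1
        have hpos : (0:ℝ) < (M:ℝ) - NR := by linarith
        rw [div_le_iff₀ hpos]
        rcases eq_or_lt_of_le hK with heq | hlt
        · -- α = K
          nlinarith [(by positivity : (0:ℝ) ≤ (NR:ℝ))]
        · -- K < α, so M ≥ K + NR + 1
          have hMK : (K:ℝ) + NR < M := by linarith
          have hMK' : K + NR + 1 ≤ M := by
            have : K + NR < M := by exact_mod_cast hMK
            omega
          have hMK'' : (K:ℝ) + NR + 1 ≤ M := by exact_mod_cast hMK'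
          nlinarith [mul_nonneg (show (0:ℝ) ≤ (NR:ℝ) - (α - K) by linarith)
            (show (0:ℝ) ≤ (M:ℝ) - NR - K - 1 by linarith)]
      · -- d = M, show M ≤ K + NR
        push_neg at hb
        by_cases hMN : NR < M
        · have hlt : (M:ℝ) - NR < α := hb hMN
          have : (M:ℝ) < K + NR + 1 := by linarith
          have hM' : M < K + NR + 1 := by exact_mod_cast this
          have : M ≤ K + NR := by omega
          exact_mod_cast this
        · push_neg at hMN
          have : (M:ℝ) ≤ NR := by exact_mod_cast hMN
          have : (0:ℝ) ≤ K := Nat.cast_nonneg K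
          linarith
    · have hmem : K + NR ∈ Finset.Icc 1 NT := Finset.mem_Icc.2 ⟨by omega, hKNT⟩
      refine le_trans ?_ (Finset.le_sup' (fun M => d α M) hmem)
      rw [hd]
      split_ifs with hb
      · obtain ⟨hb1, hb2⟩ := hb
        have hb2' : α ≤ (K:ℝ) := by push_cast at hb2; linarith
        have heq : α = (K:ℝ) := le_antisymm hb2' hK
        have hKpos : 0 < K := by omega
        have hKpos' : (0:ℝ) < K := by exact_mod_cast hKpos
        rw [heq]
        push_cast
        field_simp
        exact le_of_eq (by rw [add_sub_cancel_right, div_self (ne_of_gt hKpos')])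
      · push_cast
        exact le_rfl
  · -- α ≤ NT - NR and fract α * (K + NR + 1) > NR : sup = α(K+NR+1)/(K+1)
    push_neg at h1 h2
    rw [hfr] at h2
    have hfpos : (0:ℝ) < α - K := by nlinarith [(by positivity : (0:ℝ) ≤ (K:ℝ)), (by positivity : (0:ℝ) ≤ (NR:ℝ))]
    have hKNT : K + NR + 1 ≤ NT := by
      have : (K:ℝ) + NR < NT := by linarith
      have : K + NR < NT := by exact_mod_cast this
      omega
    have hK1pos : (0:ℝ) < (K:ℝ) + 1 := by positivity
    apply le_antisymm
    · apply Finset.sup'_le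
      intro M hM
      rw [hd]
      split_ifs with hb
      · obtain ⟨hb1, hb2⟩ := hb
        have hb1' : (NR:ℝ) < M := by exact_mod_cast hb1
        have hpos : (0:ℝ) < (M:ℝ) - NR := by linarith
        have hMK : (K:ℝ) + NR < M := by linarith
        have hMK' : K + NR + 1 ≤ M := by
          have : K + NR < M := by exact_mod_cast hMK
          omega
        have hMK'' : (K:ℝ) + NR + 1 ≤ M := by exact_mod_cast hMK'
        rw [div_le_div_iff₀ hpos hK1pos]
        nlinarith [mul_nonneg (mul_nonneg hα (show (0:ℝ) ≤ (NR:ℝ) by linarith))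
          (show (0:ℝ) ≤ (M:ℝ) - K - NR - 1 by linarith)]
      · push_neg at hb
        have hMle : (M:ℝ) ≤ (K:ℝ) + NR := by
          by_cases hMN : NR < M
          · have hlt : (M:ℝ) - NR < α := hb hMN
            have : (M:ℝ) < K + NR + 1 := by linarith
            have hM' : M < K + NR + 1 := by exact_mod_cast this
            have : M ≤ K + NR := by omega
            exact_mod_cast this
          · push_neg at hMN
            have : (M:ℝ) ≤ NR := by exact_mod_cast hMN
            have : (0:ℝ) ≤ K := Nat.cast_nonneg K
            linarith
        rw [le_div_iff₀ hK1pos]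
        nlinarith [mul_nonneg (show (0:ℝ) ≤ (K:ℝ) + NR - M by linarith) (le_of_lt hK1pos)]
    · have hmem : K + NR + 1 ∈ Finset.Icc 1 NT := Finset.mem_Icc.2 ⟨by omega, hKNT⟩
      refine le_trans ?_ (Finset.le_sup' (fun M => d α M) hmem)
      rw [hd, if_pos]
      · apply le_of_eq
        push_cast
        congr 1
        ring
      · constructor
        · omega
        · push_cast
          linarith
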